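/- Let i : ℝ → (0,∞) be continuous, i* > 0, g : [0,h] → ℝ₊ continuous, and G(x) = x - 1 - ln x. Define V₂(t) = ∫₀ʰ g(τ)·(∫₀^τ G(i(t-u)/i*)du)dτ. Then V₂ is differentiable with V₂'(t) = ∫₀ʰ g(τ)·(i(t)/i* - i(t-τ)/i* + ln(i(t-τ)/i(t)))dτ. -/

import Mathlib

open MeasureTheory intervalIntegral Set

theorem lyapunov_V2_deriv (h istar : ℝ) (hh : 0 ≤ h) (histar : 0 < istar)
    (i g : ℝ → ℝ) (hi : Continuous i) (hi_pos : ∀ t, 0 < i t)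
    (hg : ContinuousOn g (Set.Icc 0 h))
    (hg_nonneg : ∀ τ ∈ Set.Icc 0 h, 0 ≤ g τ) :
    ∀ t : ℝ,
      HasDerivAt
        (fun t => ∫ τ in (0:ℝ)..h, g τ *
          ∫ u in (0:ℝ)..τ, (i (t - u) / istar - 1 - Real.log (i (t - u) / istar)))
        (∫ τ in (0:ℝ)..h, g τ *
          (i t / istar - i (t - τ) / istar + Real.log (i (t - τ) / i t))) t := by
  intro t
  set Fi : ℝ → ℝ := fun s => i s / istar - 1 - Real.log (i s / istar) with hFidef
  have hFic : Continuous Fi := by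
    refine ((hi.div_const istar).sub continuous_const).sub ?_
    exact (hi.div_const istar).log fun x => ne_of_gt (div_pos (hi_pos x) histar)
  set Φ : ℝ → ℝ := fun x => ∫ v in (0:ℝ)..x, Fi v with hΦdef
  have hΦ : ∀ x, HasDerivAt Φ (Fi x) x := fun x =>
    intervalIntegral.integral_hasDerivAt_right (hFic.intervalIntegrable 0 x)
      (hFic.stronglyMeasurableAtFilter _ _) hFic.continuousAt
  have hΦc : Continuous Φ := continuous_iff_continuousAt.2 fun x => (hΦ x).continuousAt
  have key : ∀ x τ : ℝ, (∫ u in (0:ℝ)..τ, Fi (x - u)) = Φ x - Φ (x - τ) := by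
    intro x τ
    rw [intervalIntegral.integral_comp_sub_left Fi x, sub_zero,
      ← intervalIntegral.integral_interval_sub_left (hFic.intervalIntegrable 0 x)
        (hFic.intervalIntegrable 0 (x - τ))]
  -- bounds
  obtain ⟨Mg, hMg⟩ := (isCompact_Icc : IsCompact (Icc (0:ℝ) h)).exists_bound_of_continuousOn hg
  obtain ⟨C, hC⟩ := (isCompact_Icc : IsCompact (Icc (t - h - 1) (t + 1))).exists_bound_of_continuousOn
    hFic.continuousOn
  have huIoc : Set.uIoc (0:ℝ) h = Set.Ioc 0 h := Set.uIoc_of_le hh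
  have huIcc : Set.uIcc (0:ℝ) h = Set.Icc 0 h := Set.uIcc_of_le hh
  have hmem : ∀ τ ∈ Set.Ioc (0:ℝ) h, ∀ x ∈ Metric.ball t 1,
      x ∈ Icc (t - h - 1) (t + 1) ∧ x - τ ∈ Icc (t - h - 1) (t + 1) := by
    intro τ hτ x hx
    rw [Metric.mem_ball, Real.dist_eq, abs_lt] at hx
    constructor <;> constructor <;> [skip; skip; skip; skip] <;> cases' hτ with h1 h2 <;> linarith
  have main : HasDerivAt (fun x => ∫ τ in (0:ℝ)..h, g τ * (Φ x - Φ (x - τ)))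
      (∫ τ in (0:ℝ)..h, g τ * (Fi t - Fi (t - τ))) t := by
    have cont : ∀ x : ℝ, ContinuousOn (fun τ => g τ * (Φ x - Φ (x - τ))) (Icc 0 h) :=
      fun x => hg.mul ((continuous_const.sub (hΦc.comp (continuous_const.sub continuous_id))).continuousOn)
    have contd : ContinuousOn (fun τ => g τ * (Fi t - Fi (t - τ))) (Icc 0 h) :=
      hg.mul ((continuous_const.sub (hFic.comp (continuous_const.sub continuous_id))).continuousOn)
    have meas : ∀ x : ℝ, AEStronglyMeasurable (fun τ => g τ * (Φ x - Φ (x - τ)))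
        (volume.restrict (Set.uIoc (0:ℝ) h)) := by
      intro x
      rw [huIoc]
      exact ((cont x).aestronglyMeasurable measurableSet_Icc).mono_measure
        (Measure.restrict_mono Set.Ioc_subset_Icc_self le_rfl)
    have measd : AEStronglyMeasurable (fun τ => g τ * (Fi t - Fi (t - τ)))
        (volume.restrict (Set.uIoc (0:ℝ) h)) := by
      rw [huIoc]
      exact (contd.aestronglyMeasurable measurableSet_Icc).mono_measure
        (Measure.restrict_mono Set.Ioc_subset_Icc_self le_rfl)
    have := intervalIntegral.hasDerivAt_integral_of_dominated_loc_of_deriv_le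
      (F := fun x τ => g τ * (Φ x - Φ (x - τ)))
      (F' := fun x τ => g τ * (Fi x - Fi (x - τ)))
      (bound := fun _ => Mg * (C + C)) (a := 0) (b := h) (x₀ := t) (μ := volume)
      (s := Metric.ball t 1) (Metric.ball_mem_nhds t one_pos)
      (Filter.Eventually.of_forall meas)
      (by
        apply ((cont t).mono ?_).intervalIntegrable
        rw [huIcc])
      measd
      (by
        refine Filter.Eventually.of_forall fun τ hτ => ?_
        rw [huIoc] at hτ
        intro x hx
        obtain ⟨hx1, hx2⟩ := hmem τ hτ x hx
        have h1 : |g τ| ≤ Mg := hMg τ (Set.Ioc_subset_Icc_self hτ)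
        have h2 : |Fi x - Fi (x - τ)| ≤ C + C :=
          (abs_sub _ _).trans (add_le_add (hC _ hx1) (hC _ hx2))
        calc ‖g τ * (Fi x - Fi (x - τ))‖ = |g τ| * |Fi x - Fi (x - τ)| := abs_mul _ _
          _ ≤ Mg * (C + C) := mul_le_mul h1 h2 (abs_nonneg _) ((abs_nonneg _).trans h1))
      intervalIntegrable_const
      (by
        refine Filter.Eventually.of_forall fun τ _ => fun x _ => ?_
        have h1 : HasDerivAt (fun x => Φ x - Φ (x - τ)) (Fi x - Fi (x - τ)) x := by
          have h2 : HasDerivAt (fun x : ℝ => Φ (x - τ)) (Fi (x - τ)) x := by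
            have := (hΦ (x - τ)).comp x ((hasDerivAt_id x).sub_const τ)
            rw [mul_one] at this
            exact this
          exact (hΦ x).sub h2
        exact h1.const_mul (g τ))
    exact this.2
  have hfun : (fun x => ∫ τ in (0:ℝ)..h, g τ *
      ∫ u in (0:ℝ)..τ, (i (x - u) / istar - 1 - Real.log (i (x - u) / istar)))
      = fun x => ∫ τ in (0:ℝ)..h, g τ * (Φ x - Φ (x - τ)) := by
    funext x
    refine intervalIntegral.integral_congr fun τ _ => ?_
    rw [← key x τ]
  have hval : (∫ τ in (0:ℝ)..h, g τ * (Fi t - Fi (t - τ)))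
      = ∫ τ in (0:ℝ)..h, g τ * (i t / istar - i (t - τ) / istar + Real.log (i (t - τ) / i t)) := by
    refine intervalIntegral.integral_congr fun τ _ => ?_
    have l1 : Real.log (i t / istar) = Real.log (i t) - Real.log istar :=
      Real.log_div (ne_of_gt (hi_pos t)) (ne_of_gt histar)
    have l2 : Real.log (i (t - τ) / istar) = Real.log (i (t - τ)) - Real.log istar :=
      Real.log_div (ne_of_gt (hi_pos _)) (ne_of_gt histar)
    have l3 : Real.log (i (t - τ) / i t) = Real.log (i (t - τ)) - Real.log (i t) :=
      Real.log_div (ne_of_gt (hi_pos _)) (ne_of_gt (hi_pos t))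
    simp only [hFidef, l1, l2, l3]
    ring
  rw [hfun, ← hval]
  exact main
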